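/- For all a > 0 and all real ω, e^{-a}·|Ω(ω)|² ≤ |Ω(ω, a)|², where Ω(ω) := (1 - e^{-iω})/(iω) for ω ≠ 0 (and Ω(0) := 1) and Ω(ω, a) := (1 - e^{-(a+iω)})/(a+iω). -/

import Mathlib

open Complex

noncomputable def OmegaA (ω a : ℝ) : ℂ :=
  (1 - Complex.exp (-(a + ω * Complex.I))) / (a + ω * Complex.I)

noncomputable def Omega (ω : ℝ) : ℂ :=
  if ω = 0 then 1 else (1 - Complex.exp (-(ω * Complex.I))) / (ω * Complex.I)

lemma abs_OmegaA_sq (a ω : ℝ) (ha : 0 < a) :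
    ‖OmegaA ω a‖ ^ 2
      = (1 - 2*Real.exp (-a)*Real.cos ω + Real.exp (-a)^2) / (a^2 + ω^2) := by
  rw [OmegaA, norm_div, div_pow, Complex.sq_norm, Complex.sq_norm, Complex.normSq_apply,
    Complex.normSq_apply]
  simp [Complex.exp_re, Complex.exp_im]
  ring_nf
  linear_combination (Real.exp (-a)^2 * (a^2+ω^2)⁻¹) * (Real.sin_sq_add_cos_sq ω)

lemma abs_Omega_sq (ω : ℝ) (h : ω ≠ 0) :
    ‖Omega ω‖ ^ 2 = (2 - 2*Real.cos ω) / ω^2 := by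
  rw [Omega, if_neg h, norm_div, div_pow, Complex.sq_norm, Complex.sq_norm, Complex.normSq_apply,
    Complex.normSq_apply]
  simp [Complex.exp_re, Complex.exp_im]
  ring_nf
  linear_combination ((ω^2)⁻¹) * (Real.sin_sq_add_cos_sq ω)

lemma exp_add_exp_neg_ge (a : ℝ) (ha : 0 ≤ a) :
    2 + a^2 ≤ Real.exp a + Real.exp (-a) := by
  have h1 : (a/2) ≤ Real.sinh (a/2) := Real.self_le_sinh_iff.mpr (by linarith)
  have h2 : Real.cosh a = 2 * Real.sinh (a/2)^2 + 1 := by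
    rw [show a = 2*(a/2) by ring, Real.cosh_two_mul, Real.cosh_sq]
    ring
  have h3 : Real.cosh a = (Real.exp a + Real.exp (-a)) / 2 := Real.cosh_eq a
  nlinarith [h1, h2, h3]

theorem abs_Omega_lower_bound (a ω : ℝ) (ha : 0 < a) :
    Real.exp (-a) * ‖Omega ω‖ ^ 2 ≤ ‖OmegaA ω a‖ ^ 2 := by
  set E := Real.exp (-a) with hEdef
  set F := Real.exp a with hFdef
  have hE : 0 < E := Real.exp_pos _
  have hEF : E * F = 1 := by
    rw [hEdef, hFdef, ← Real.exp_add]; simp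
  have hcosh : 2 + a^2 ≤ F + E := exp_add_exp_neg_ge a ha.le
  rw [abs_OmegaA_sq a ω ha]
  by_cases hω : ω = 0
  · subst hω
    have h0 : Omega 0 = 1 := by simp [Omega]
    rw [h0, Real.cos_zero]
    simp only [norm_one, one_pow, mul_one]
    rw [le_div_iff₀ (by positivity)]
    nlinarith [hcosh, hEF, hE]
  · rw [abs_Omega_sq ω hω]
    have hω2 : 0 < ω^2 := by positivity
    have hc1 : Real.cos ω ≤ 1 := Real.cos_le_one ω
    have hc2 : 1 - ω^2/2 ≤ Real.cos ω := Real.one_sub_sq_div_two_le_cos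
    have h3 : (2 - 2*Real.cos ω) * a^2 ≤ (F + E - 2) * ω^2 := by nlinarith
    have key : E * ((2 - 2*Real.cos ω) * a^2) ≤ E * ((F + E - 2) * ω^2) :=
      mul_le_mul_of_nonneg_left h3 hE.le
    rw [mul_div_assoc', div_le_div_iff₀ hω2 (by positivity)]
    nlinarith [key, mul_le_mul_of_nonneg_right hEF.le hω2.le, mul_le_mul_of_nonneg_right hEF.ge hω2.le]
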